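/- Let G be a real symmetric positive semidefinite n×n matrix (playing the role of YYᵀ), let λ_G := (1ₙᵀG1ₙ − tr(G))/(n(n−1)), A := G − λ_G·(E_n − I_n), Ã := G − λ_G·E_n, and let t ∈ ℝ. Then: (i) max over Z ∈ M_G⁺ of ⟨A, Z⟩ equals max over Z ∈ M_opt of ⟨A, Z⟩, and every maximizer of ⟨A, Z⟩ over M_opt is also a maximizer over M_G⁺; (ii) over M_opt, the sets of maximizers of ⟨A, Z⟩, of ⟨Ã, Z⟩, and of ⟨A − t·I_n, Z⟩ all coincide; (iii) if moreover G_{jj} > 0 for every j, then the set of maximizers of ⟨A, Z⟩ over M_G⁺ equals the set of maximizers of ⟨A, Z⟩ over M_opt. -/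

import Mathlib

open Matrix Finset

noncomputable section

def opNorm {k l : ℕ} (A : Matrix (Fin k) (Fin l) ℝ) : ℝ :=
  ‖(Matrix.toEuclideanLin A).toContinuousLinearMap‖

def ip {n : ℕ} (A B : Matrix (Fin n) (Fin n) ℝ) : ℝ := Matrix.trace (Aᵀ * B)

def ell1Norm {k l : ℕ} (M : Matrix (Fin k) (Fin l) ℝ) : ℝ := ∑ i, ∑ j, |M i j|

def frobNorm {k l : ℕ} (M : Matrix (Fin k) (Fin l) ℝ) : ℝ :=
  Real.sqrt (∑ i, ∑ j, (M i j) ^ 2)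

def euclNorm {k : ℕ} (x : Fin k → ℝ) : ℝ := Real.sqrt (∑ i, x i ^ 2)

def En (n : ℕ) : Matrix (Fin n) (Fin n) ℝ := Matrix.of fun _ _ => 1

def centering (n : ℕ) : Matrix (Fin n) (Fin n) ℝ := 1 - ((n : ℝ)⁻¹) • En n

def Mopt (n : ℕ) : Set (Matrix (Fin n) (Fin n) ℝ) :=
  {Z | Z.PosSemidef ∧ ∀ i, Z i i = 1}

def MGplus (n : ℕ) : Set (Matrix (Fin n) (Fin n) ℝ) :=
  {Z | Z.PosSemidef ∧ ∀ i, Z i i ≤ 1}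

def MoptPlus (n : ℕ) : Set (Matrix (Fin n) (Fin n) ℝ) :=
  {Z | Z.PosSemidef ∧ (∀ i, Z i i = 1) ∧ ip (En n) Z = 0}

def u2 (n n₁ : ℕ) : Fin n → ℝ := fun j => if (j : ℕ) < n₁ then 1 else -1

def Zstar (n n₁ : ℕ) : Matrix (Fin n) (Fin n) ℝ :=
  Matrix.vecMulVec (u2 n n₁) (u2 n n₁)

def wmin (n n₁ n₂ : ℕ) : ℝ := min ((n₁ : ℝ) / n) ((n₂ : ℝ) / n)

def vref (n n₁ n₂ : ℕ) : Fin n → ℝ :=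
  fun j => if (j : ℕ) < n₁ then (n₂ : ℝ) / n else -((n₁ : ℝ) / n)

def Rmat (n n₁ n₂ p : ℕ) (γ : ℝ) : Matrix (Fin n) (Fin n) ℝ :=
  ((p : ℝ) * γ) • Matrix.vecMulVec (vref n n₁ n₂) (vref n n₁ n₂)


lemma psd_diag_nonneg {n : ℕ} {Z : Matrix (Fin n) (Fin n) ℝ} (hZ : Z.PosSemidef) (i : Fin n) :
    0 ≤ Z i i := by
  exact hZ.diag_nonneg

lemma ip_sum (n : ℕ) (A Z : Matrix (Fin n) (Fin n) ℝ) :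
    ip A Z = ∑ i, ∑ j, A i j * Z i j := by
  simp only [ip, Matrix.trace, Matrix.mul_apply, Matrix.diag, Matrix.transpose_apply]
  rw [Finset.sum_comm]

lemma psd_entry_sq {n : ℕ} {Z : Matrix (Fin n) (Fin n) ℝ} (hZ : Z.PosSemidef) (i j : Fin n) :
    (Z i j) ^ 2 ≤ Z i i * Z j j := by
  obtain ⟨m, v, rfl⟩ := Matrix.posSemidef_iff_eq_sum_vecMulVec.mp hZ
  have h := Finset.sum_mul_sq_le_sq_mul_sq Finset.univ (fun k => v k i) (fun k => v k j)
  simpa [Matrix.sum_apply, Matrix.vecMulVec_apply, pow_two] using h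

lemma mg_entry_abs {n : ℕ} {Z : Matrix (Fin n) (Fin n) ℝ} (hZ : Z ∈ MGplus n) (i j : Fin n) :
    |Z i j| ≤ 1 := by
  have h := psd_entry_sq hZ.1 i j
  have h2 : Z i i * Z j j ≤ 1 := by
    have := mul_le_one₀ (hZ.2 i) (psd_diag_nonneg hZ.1 j) (hZ.2 j)
    simpa using this
  have : (Z i j) ^ 2 ≤ 1 := h.trans h2
  nlinarith [abs_nonneg (Z i j), sq_abs (Z i j)]

lemma ip_bound {n : ℕ} (A : Matrix (Fin n) (Fin n) ℝ) {Z : Matrix (Fin n) (Fin n) ℝ}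
    (hZ : Z ∈ MGplus n) : ip A Z ≤ ∑ i, ∑ j, |A i j| := by
  rw [ip_sum]
  refine Finset.sum_le_sum fun i _ => Finset.sum_le_sum fun j _ => ?_
  calc A i j * Z i j ≤ |A i j * Z i j| := le_abs_self _
    _ = |A i j| * |Z i j| := abs_mul _ _
    _ ≤ |A i j| * 1 := by
        exact mul_le_mul_of_nonneg_left (mg_entry_abs hZ i j) (abs_nonneg _)
    _ = |A i j| := mul_one _

lemma ip_add_right {n : ℕ} (A B C : Matrix (Fin n) (Fin n) ℝ) :
    ip A (B + C) = ip A B + ip A C := by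
  simp [ip, Matrix.mul_add]

lemma ip_diag {n : ℕ} (A : Matrix (Fin n) (Fin n) ℝ) (d : Fin n → ℝ) :
    ip A (Matrix.diagonal d) = ∑ i, A i i * d i := by
  simp [ip_sum, Matrix.diagonal_apply, mul_ite]

lemma ip_sub_smul_one {n : ℕ} (A Z : Matrix (Fin n) (Fin n) ℝ) (c : ℝ) :
    ip (A - c • (1 : Matrix (Fin n) (Fin n) ℝ)) Z = ip A Z - c * Matrix.trace Z := by
  simp [ip, Matrix.transpose_sub, Matrix.sub_mul, Matrix.smul_mul, Matrix.trace_sub,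
    Matrix.trace_smul, smul_eq_mul]

lemma one_mem_Mopt (n : ℕ) : (1 : Matrix (Fin n) (Fin n) ℝ) ∈ Mopt n :=
  ⟨Matrix.PosSemidef.one, fun i => by simp⟩

lemma Mopt_subset (n : ℕ) : Mopt n ⊆ MGplus n := fun Z hZ => ⟨hZ.1, fun i => (hZ.2 i).le⟩

/-- the lifted matrix -/
lemma lift_spec {n : ℕ} {Z : Matrix (Fin n) (Fin n) ℝ} (hZ : Z ∈ MGplus n)
    (A : Matrix (Fin n) (Fin n) ℝ) :
    (Z + Matrix.diagonal (fun i => 1 - Z i i)) ∈ Mopt n ∧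
    ip A (Z + Matrix.diagonal (fun i => 1 - Z i i)) =
      ip A Z + ∑ i, A i i * (1 - Z i i) := by
  constructor
  · refine ⟨hZ.1.add (Matrix.posSemidef_diagonal_iff.mpr fun i => by
      simpa using sub_nonneg.mpr (hZ.2 i)), fun i => by simp⟩
  · rw [ip_add_right, ip_diag]


/-- equivalence of the SDP, SDP1 and OracleSDP optimization goals. -/
theorem sdp_equivalences (n : ℕ) (hn : 2 ≤ n) (G : Matrix (Fin n) (Fin n) ℝ)
    (hG : G.PosSemidef) (t : ℝ) :
    let lamG : ℝ := ((∑ i, ∑ j, G i j) - Matrix.trace G) / ((n : ℝ) * ((n : ℝ) - 1));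
    let A := G - lamG • (En n - 1);
    let Atil := G - lamG • En n;
    (sSup (ip A '' MGplus n) = sSup (ip A '' Mopt n)) ∧
    (∀ Zhat ∈ Mopt n, (∀ Z ∈ Mopt n, ip A Z ≤ ip A Zhat) →
      ∀ Z ∈ MGplus n, ip A Z ≤ ip A Zhat) ∧
    (∀ Zhat ∈ Mopt n,
      ((∀ Z ∈ Mopt n, ip A Z ≤ ip A Zhat) ↔
        (∀ Z ∈ Mopt n, ip Atil Z ≤ ip Atil Zhat)) ∧
      ((∀ Z ∈ Mopt n, ip A Z ≤ ip A Zhat) ↔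
        (∀ Z ∈ Mopt n,
          ip (A - t • (1 : Matrix (Fin n) (Fin n) ℝ)) Z ≤
            ip (A - t • (1 : Matrix (Fin n) (Fin n) ℝ)) Zhat))) ∧
    ((∀ j, 0 < G j j) →
      ∀ Zhat : Matrix (Fin n) (Fin n) ℝ,
        (Zhat ∈ MGplus n ∧ ∀ Z ∈ MGplus n, ip A Z ≤ ip A Zhat) ↔
        (Zhat ∈ Mopt n ∧ ∀ Z ∈ Mopt n, ip A Z ≤ ip A Zhat)) := by
  intro lamG A Atil
  have hA : A = G - lamG • (En n - 1) := rfl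
  have hAt : Atil = A - lamG • 1 := by
    show G - lamG • En n = _
    rw [hA]; module
  have hAii : ∀ i, A i i = G i i := by
    intro i; rw [hA]; simp [En, Matrix.sub_apply, Matrix.smul_apply, Matrix.one_apply]
  have hAnn : ∀ i, 0 ≤ A i i := fun i => (hAii i) ▸ psd_diag_nonneg hG i
  -- key lifting lemma
  have key : ∀ Z ∈ MGplus n, ∃ Z' ∈ Mopt n, ip A Z ≤ ip A Z' := by
    intro Z hZ
    obtain ⟨hmem, heq⟩ := lift_spec hZ A
    refine ⟨_, hmem, ?_⟩
    rw [heq]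
    exact le_add_of_nonneg_right (Finset.sum_nonneg fun i _ =>
      mul_nonneg (hAnn i) (sub_nonneg.mpr (hZ.2 i)))
  -- part 2
  have part2 : ∀ Zhat ∈ Mopt n, (∀ Z ∈ Mopt n, ip A Z ≤ ip A Zhat) →
      ∀ Z ∈ MGplus n, ip A Z ≤ ip A Zhat := by
    intro Zhat _ hmax Z hZ
    obtain ⟨Z', hZ', hle⟩ := key Z hZ
    exact hle.trans (hmax Z' hZ')
  -- bounds for sSup
  have hbdd : BddAbove (ip A '' MGplus n) :=
    ⟨∑ i, ∑ j, |A i j|, by rintro x ⟨Z, hZ, rfl⟩; exact ip_bound A hZ⟩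
  have hbdd2 : BddAbove (ip A '' Mopt n) :=
    hbdd.mono (Set.image_mono (Mopt_subset n))
  have hne2 : (ip A '' Mopt n).Nonempty := ⟨_, ⟨1, one_mem_Mopt n, rfl⟩⟩
  have part1 : sSup (ip A '' MGplus n) = sSup (ip A '' Mopt n) := by
    apply le_antisymm
    · refine csSup_le (hne2.mono (Set.image_mono (Mopt_subset n))) ?_
      rintro x ⟨Z, hZ, rfl⟩
      obtain ⟨Z', hZ', hle⟩ := key Z hZ
      exact hle.trans (le_csSup hbdd2 ⟨Z', hZ', rfl⟩)
    · exact csSup_le_csSup hbdd hne2 (Set.image_mono (Mopt_subset n))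
  have htr : ∀ Z ∈ Mopt n, Matrix.trace Z = n := by
    intro Z hZ
    simp [Matrix.trace, Matrix.diag, hZ.2]
  have gen : ∀ c : ℝ, ∀ Zhat ∈ Mopt n, ((∀ Z ∈ Mopt n, ip A Z ≤ ip A Zhat) ↔
      (∀ Z ∈ Mopt n, ip (A - c • (1 : Matrix (Fin n) (Fin n) ℝ)) Z ≤
        ip (A - c • (1 : Matrix (Fin n) (Fin n) ℝ)) Zhat)) := by
    intro c Zhat hZhat
    constructor
    · intro h Z hZ
      rw [ip_sub_smul_one, ip_sub_smul_one, htr Z hZ, htr Zhat hZhat]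
      exact sub_le_sub_right (h Z hZ) _
    · intro h Z hZ
      have := h Z hZ
      rw [ip_sub_smul_one, ip_sub_smul_one, htr Z hZ, htr Zhat hZhat] at this
      linarith
  refine ⟨part1, part2, ?_, ?_⟩
  · intro Zhat hZhat
    refine ⟨?_, gen t Zhat hZhat⟩
    rw [hAt]
    exact gen lamG Zhat hZhat
  · intro hGpos Zhat
    constructor
    · rintro ⟨hmem, hmax⟩
      obtain ⟨hmem', heq⟩ := lift_spec hmem A
      have hle := hmax _ (Mopt_subset n hmem')
      rw [heq] at hle
      have hsum : ∑ i, A i i * (1 - Zhat i i) ≤ 0 := by linarith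
      have hzero : ∀ i ∈ Finset.univ, A i i * (1 - Zhat i i) = 0 := by
        rw [← Finset.sum_eq_zero_iff_of_nonneg
          (fun i _ => mul_nonneg (hAnn i) (sub_nonneg.mpr (hmem.2 i)))]
        exact le_antisymm hsum (Finset.sum_nonneg
          (fun i _ => mul_nonneg (hAnn i) (sub_nonneg.mpr (hmem.2 i))))
      have hdiag : ∀ i, Zhat i i = 1 := by
        intro i
        have h0 := hzero i (Finset.mem_univ i)
        have hpos : 0 < A i i := (hAii i) ▸ hGpos i
        have := (mul_eq_zero.mp h0).resolve_left (ne_of_gt hpos)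
        linarith
      have hZm : Zhat ∈ Mopt n := ⟨hmem.1, hdiag⟩
      exact ⟨hZm, fun Z hZ => hmax Z (Mopt_subset n hZ)⟩
    · rintro ⟨hmem, hmax⟩
      exact ⟨Mopt_subset n hmem, part2 Zhat hmem hmax⟩

end
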